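/- For 0 < p < ∞, a positive Borel measure μ on ℂ satisfies ∫_ℂ |f(z)|^p e^{-(pα/2)|z|²} dμ(z) ≤ C ‖f‖_{∞,α}^p for all f ∈ F_α^∞ (with C independent of f) if and only if μ(ℂ) < ∞. -/

import Mathlib

open MeasureTheory Complex Filter Topology ENNReal NNReal

/-- The `F_α^∞` norm as an extended real. -/
noncomputable def fockNormInf (α : ℝ) (f : ℂ → ℂ) : ℝ≥0∞ :=
  ⨆ z : ℂ, ENNReal.ofReal (‖f z‖ * Real.exp (-(α / 2) * ‖z‖ ^ 2))

/-- Base function: `e^{π u²/2} θ₂(u, i)`, entire, with doubly periodic Gaussian-weighted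
modulus. -/
noncomputable def fockPhi (u : ℂ) : ℂ :=
  Complex.exp ((Real.pi : ℂ) * u ^ 2 / 2) * jacobiTheta₂ u Complex.I

/-- The Gaussian-weighted modulus of `fockPhi`. -/
noncomputable def fockG (u : ℂ) : ℝ :=
  ‖fockPhi u‖ * Real.exp (-(Real.pi / 2) * ‖u‖ ^ 2)

lemma fockG_nonneg (u : ℂ) : 0 ≤ fockG u :=
  mul_nonneg (norm_nonneg _) (Real.exp_pos _).le

lemma differentiable_fockPhi : Differentiable ℂ fockPhi := by
  apply Differentiable.mul
  · apply Differentiable.cexp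
    exact ((differentiable_pow 2).const_mul _).div_const _
  · intro u
    exact differentiableAt_jacobiTheta₂_fst u (by simp)

lemma continuous_fockG : Continuous fockG := by
  apply Continuous.mul
  · exact continuous_norm.comp differentiable_fockPhi.continuous
  · exact Real.continuous_exp.comp (continuous_const.mul (continuous_norm.pow 2))

lemma fockG_add_one (u : ℂ) : fockG (u + 1) = fockG u := by
  have h1 : fockPhi (u + 1) =
      Complex.exp (((Real.pi / 2 : ℝ) : ℂ) * (2 * u + 1)) * fockPhi u := by
    unfold fockPhi
    rw [jacobiTheta₂_add_left, ← mul_assoc, ← Complex.exp_add]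
    congr 2
    push_cast
    ring
  have hexp : Real.exp ((((Real.pi / 2 : ℝ) : ℂ) * (2 * u + 1)).re) *
      Real.exp (-(Real.pi / 2) * ‖u + 1‖ ^ 2)
      = Real.exp (-(Real.pi / 2) * ‖u‖ ^ 2) := by
    rw [← Real.exp_add]
    congr 1
    rw [Complex.re_ofReal_mul, Complex.sq_norm, Complex.sq_norm]
    simp only [Complex.add_re, Complex.one_re, Complex.mul_re, Complex.re_ofNat, Complex.im_ofNat,
      Complex.normSq_apply, Complex.add_im, Complex.one_im]
    ring
  unfold fockG
  rw [h1, norm_mul, Complex.norm_exp, ← hexp]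
  ring

lemma fockG_add_I (u : ℂ) : fockG (u + Complex.I) = fockG u := by
  have h1 : fockPhi (u + Complex.I) =
      Complex.exp (((Real.pi / 2 : ℝ) : ℂ) * (1 - 2 * Complex.I * u)) * fockPhi u := by
    unfold fockPhi
    rw [jacobiTheta₂_add_left', ← mul_assoc, ← Complex.exp_add, ← mul_assoc, ← Complex.exp_add]
    congr 2
    push_cast
    linear_combination (-(Real.pi : ℂ) / 2) * Complex.I_sq
  have hexp : Real.exp ((((Real.pi / 2 : ℝ) : ℂ) * (1 - 2 * Complex.I * u)).re) *
      Real.exp (-(Real.pi / 2) * ‖u + Complex.I‖ ^ 2)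
      = Real.exp (-(Real.pi / 2) * ‖u‖ ^ 2) := by
    rw [← Real.exp_add]
    congr 1
    rw [Complex.re_ofReal_mul, Complex.sq_norm, Complex.sq_norm]
    simp only [Complex.sub_re, Complex.one_re, Complex.mul_re, Complex.mul_im, Complex.I_re,
      Complex.I_im, Complex.re_ofNat, Complex.im_ofNat, Complex.normSq_apply, Complex.add_re,
      Complex.add_im, Complex.sub_im, Complex.one_im]
    ring
  unfold fockG
  rw [h1, norm_mul, Complex.norm_exp, ← hexp]
  ring

lemma fockG_sub_lattice (u : ℂ) (m n : ℤ) :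
    fockG (u - (m + n * Complex.I)) = fockG u := by
  have h1 : Function.Periodic fockG 1 := fockG_add_one
  have hI : Function.Periodic fockG Complex.I := fockG_add_I
  have e1 := (h1.int_mul m) (u - (m + n * Complex.I))
  have e2 := (hI.int_mul n) (u - (m + n * Complex.I) + m * 1)
  rw [show u - (↑m + ↑n * Complex.I) + ↑m * 1 + ↑n * Complex.I = u by ring] at e2
  rw [e2]
  exact e1.symm

lemma fockG_bounded : ∃ M : ℝ, 0 ≤ M ∧ ∀ u, fockG u ≤ M := by
  obtain ⟨v, _, hmax⟩ := (isCompact_closedBall (0 : ℂ) 2).exists_isMaxOn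
    ⟨0, by simp⟩ continuous_fockG.continuousOn
  refine ⟨fockG v, fockG_nonneg v, fun u => ?_⟩
  have hred := fockG_sub_lattice u ⌊u.re⌋ ⌊u.im⌋
  rw [← hred]
  apply hmax
  have hre : (u - (↑⌊u.re⌋ + ↑⌊u.im⌋ * Complex.I)).re = u.re - ⌊u.re⌋ := by
    simp [Complex.sub_re, Complex.add_re, Complex.mul_re]
  have him : (u - (↑⌊u.re⌋ + ↑⌊u.im⌋ * Complex.I)).im = u.im - ⌊u.im⌋ := by
    simp [Complex.sub_im, Complex.add_im, Complex.mul_im]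
  rw [Metric.mem_closedBall, dist_zero_right]
  refine le_trans (Complex.norm_le_abs_re_add_abs_im _) ?_
  rw [hre, him]
  have h1 := Int.floor_le u.re
  have h2 := Int.lt_floor_add_one u.re
  have h3 := Int.floor_le u.im
  have h4 := Int.lt_floor_add_one u.im
  rw [_root_.abs_of_nonneg (by linarith), _root_.abs_of_nonneg (by linarith)]
  linarith

lemma fockG_zero_pos : 0 < fockG 0 := by
  have hs := hasSum_jacobiTheta₂_term 0 (by simp : (0 : ℝ) < Complex.I.im)
  have hterm : ∀ n : ℤ, jacobiTheta₂_term n 0 Complex.I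
      = ((Real.exp (-(Real.pi * (n : ℝ) ^ 2)) : ℝ) : ℂ) := by
    intro n
    unfold jacobiTheta₂_term
    rw [Complex.ofReal_exp]
    congr 1
    push_cast
    linear_combination ((Real.pi : ℂ) * (n : ℂ) ^ 2) * Complex.I_sq
  rw [funext hterm] at hs
  have hre := hs.mapL Complex.reCLM
  simp only [Complex.reCLM_apply, Complex.ofReal_re] at hre
  have h1 : Real.exp (-(Real.pi * (0 : ℤ) ^ 2)) ≤ (jacobiTheta₂ 0 Complex.I).re :=
    le_hasSum hre 0 (fun _ _ => (Real.exp_pos _).le)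
  have h2 : (0 : ℝ) < (jacobiTheta₂ 0 Complex.I).re := by
    refine lt_of_lt_of_le ?_ h1
    simp [Real.exp_pos]
  have hne : jacobiTheta₂ 0 Complex.I ≠ 0 := by
    intro h
    rw [h] at h2
    simp at h2
  have : fockG 0 = ‖jacobiTheta₂ 0 Complex.I‖ := by
    simp [fockG, fockPhi]
  rw [this]
  exact norm_pos_iff.mpr hne

lemma fockG_exists_delta : ∃ δ : ℝ, 0 < δ ∧ ∀ u : ℂ, ‖u‖ ≤ δ →
    fockG 0 / 2 ≤ fockG u := by
  have hc := continuous_fockG.continuousAt (x := 0)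
  rw [Metric.continuousAt_iff] at hc
  obtain ⟨δ, hδ, h⟩ := hc (fockG 0 / 2) (by linarith [fockG_zero_pos])
  refine ⟨δ / 2, by linarith, fun u hu => ?_⟩
  have h1 := h (x := u) (by rw [Complex.dist_eq, sub_zero]; exact lt_of_le_of_lt hu (by linarith))
  rw [Real.dist_eq] at h1
  have := abs_lt.mp h1
  linarith [this.1]

/-- The translated test function in `F_α^∞`. -/
noncomputable def fockF (α : ℝ) (w z : ℂ) : ℂ :=
  Complex.exp ((α : ℂ) * (z * (starRingEnd ℂ w)) - ((α * ‖w‖ ^ 2 / 2 : ℝ) : ℂ)) *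
    fockPhi ((Real.sqrt (α / Real.pi) : ℝ) * (z - w))

lemma differentiable_fockF (α : ℝ) (w : ℂ) : Differentiable ℂ (fockF α w) := by
  apply Differentiable.mul
  · exact (((differentiable_id.mul_const _).const_mul _).sub_const _).cexp
  · exact differentiable_fockPhi.comp ((differentiable_id.sub_const w).const_mul _)

lemma fockF_weighted (α : ℝ) (hα : 0 < α) (w z : ℂ) :
    ‖fockF α w z‖ * Real.exp (-(α / 2) * ‖z‖ ^ 2)
      = fockG ((Real.sqrt (α / Real.pi) : ℝ) * (z - w)) := by
  have hπ := Real.pi_pos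
  have hs2 : Real.sqrt (α / Real.pi) ^ 2 = α / Real.pi := Real.sq_sqrt (by positivity)
  unfold fockF fockG
  rw [norm_mul, Complex.norm_exp]
  have hre : ((α : ℂ) * (z * (starRingEnd ℂ w)) - ((α * ‖w‖ ^ 2 / 2 : ℝ) : ℂ)).re
      = α * (z * (starRingEnd ℂ w)).re - α * ‖w‖ ^ 2 / 2 := by
    rw [Complex.sub_re, Complex.re_ofReal_mul, Complex.ofReal_re]
  rw [hre]
  have hexp : Real.exp (α * (z * (starRingEnd ℂ w)).re - α * ‖w‖ ^ 2 / 2) *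
      Real.exp (-(α / 2) * ‖z‖ ^ 2)
      = Real.exp (-(Real.pi / 2) *
          ‖(Real.sqrt (α / Real.pi) : ℂ) * (z - w)‖ ^ 2) := by
    rw [← Real.exp_add]
    congr 1
    have habs : ‖(Real.sqrt (α / Real.pi) : ℂ) * (z - w)‖ ^ 2
        = Real.sqrt (α / Real.pi) ^ 2 * ‖z - w‖ ^ 2 := by
      rw [norm_mul, Complex.norm_real, Real.norm_of_nonneg (Real.sqrt_nonneg _), mul_pow]
    rw [habs, hs2]
    have hsub : ‖z - w‖ ^ 2
        = ‖z‖ ^ 2 - 2 * (z * (starRingEnd ℂ w)).re + ‖w‖ ^ 2 := by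
      rw [Complex.sq_norm, Complex.sq_norm, Complex.sq_norm]
      simp only [Complex.normSq_apply, Complex.mul_re, Complex.sub_re, Complex.sub_im,
        Complex.conj_re, Complex.conj_im]
      ring
    rw [hsub]
    field_simp
    ring
  rw [← hexp]
  ring

/-- a positive Borel measure `μ` on `ℂ` is an `(∞,p)` Fock–Carleson measure,
i.e. `∫ |f|^p e^{-(pα/2)|z|²} dμ ≤ C ‖f‖_{∞,α}^p` for all `f ∈ F_α^∞`, iff `μ(ℂ) < ∞`. -/
theorem infty_p_fock_carleson_iff_finite (α p : ℝ) (hα : 0 < α) (hp : 0 < p)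
    (μ : Measure ℂ) :
    (∃ C : ℝ≥0∞, C < ⊤ ∧ ∀ f : ℂ → ℂ, Differentiable ℂ f → fockNormInf α f < ⊤ →
        (∫⁻ z : ℂ, ENNReal.ofReal
            (‖f z‖ ^ p * Real.exp (-(p * α / 2) * ‖z‖ ^ 2)) ∂μ)
          ≤ C * fockNormInf α f ^ p)
      ↔ μ Set.univ < ⊤ := by
  constructor
  · rintro ⟨C, hC, hf⟩
    obtain ⟨M, hM0, hMb⟩ := fockG_bounded
    obtain ⟨δ, hδ, hδG⟩ := fockG_exists_delta
    have hm0 := fockG_zero_pos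
    have hπ := Real.pi_pos
    set s : ℝ := Real.sqrt (α / Real.pi) with hs_def
    have hspos : 0 < s := Real.sqrt_pos.mpr (by positivity)
    set δ₁ : ℝ := δ / 2 with hδ₁_def
    have hδ₁ : 0 < δ₁ := by positivity
    set N : ℕ := ⌊1 / δ₁⌋₊ + 1 with hN_def
    -- the grid of translation points
    set wpt : ℕ × ℕ → ℂ := fun q => ((δ₁ : ℂ) * (q.1 + q.2 * Complex.I)) / (s : ℂ) with hwpt_def
    -- per-translate integral bound
    have key : ∀ w : ℂ, ∫⁻ z, ENNReal.ofReal (fockG ((s : ℂ) * (z - w)) ^ p) ∂μ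
        ≤ C * ENNReal.ofReal M ^ p := by
      intro w
      have hnorm_le : fockNormInf α (fockF α w) ≤ ENNReal.ofReal M := by
        unfold fockNormInf
        refine iSup_le fun z => ?_
        rw [fockF_weighted α hα w z]
        exact ENNReal.ofReal_le_ofReal (hMb _)
      have h2 := hf (fockF α w) (differentiable_fockF α w)
        (lt_of_le_of_lt hnorm_le ENNReal.ofReal_lt_top)
      have heq : ∀ z : ℂ, fockG ((s : ℂ) * (z - w)) ^ p
          = ‖fockF α w z‖ ^ p * Real.exp (-(p * α / 2) * ‖z‖ ^ 2) := by
        intro z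
        rw [← fockF_weighted α hα w z,
          Real.mul_rpow (norm_nonneg _) (Real.exp_pos _).le, ← Real.exp_mul,
          show -(α / 2) * ‖z‖ ^ 2 * p = -(p * α / 2) * ‖z‖ ^ 2 by ring]
      calc ∫⁻ z, ENNReal.ofReal (fockG ((s : ℂ) * (z - w)) ^ p) ∂μ
          = ∫⁻ z, ENNReal.ofReal
            (‖fockF α w z‖ ^ p * Real.exp (-(p * α / 2) * ‖z‖ ^ 2)) ∂μ := by
            exact lintegral_congr fun z => by rw [heq z]
        _ ≤ C * fockNormInf α (fockF α w) ^ p := h2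
        _ ≤ C * ENNReal.ofReal M ^ p :=
            mul_le_mul_right (ENNReal.rpow_le_rpow hnorm_le hp.le) C
    -- covering: every z is within reach of some grid translate
    have cover : ∀ z : ℂ, ∃ q ∈ Finset.range N ×ˢ Finset.range N,
        fockG 0 / 2 ≤ fockG ((s : ℂ) * (z - wpt q)) := by
      intro z
      set u : ℂ := (s : ℂ) * z with hu_def
      set j : ℕ := ⌊(u.re - ⌊u.re⌋) / δ₁⌋₊ with hj_def
      set k : ℕ := ⌊(u.im - ⌊u.im⌋) / δ₁⌋₊ with hk_def
      have hxre : (0 : ℝ) ≤ u.re - ⌊u.re⌋ := by linarith [Int.floor_le u.re]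
      have hxre1 : u.re - ⌊u.re⌋ < 1 := by linarith [Int.lt_floor_add_one u.re]
      have hxim : (0 : ℝ) ≤ u.im - ⌊u.im⌋ := by linarith [Int.floor_le u.im]
      have hxim1 : u.im - ⌊u.im⌋ < 1 := by linarith [Int.lt_floor_add_one u.im]
      have hjN : j < N := by
        have h1 : (u.re - ⌊u.re⌋) / δ₁ ≤ 1 / δ₁ := by gcongr
        have : j ≤ ⌊1 / δ₁⌋₊ := Nat.floor_le_floor h1
        omega
      have hkN : k < N := by
        have h1 : (u.im - ⌊u.im⌋) / δ₁ ≤ 1 / δ₁ := by gcongr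
        have : k ≤ ⌊1 / δ₁⌋₊ := Nat.floor_le_floor h1
        omega
      refine ⟨(j, k), Finset.mem_product.mpr ⟨Finset.mem_range.mpr hjN, Finset.mem_range.mpr hkN⟩, ?_⟩
      have hsne : (s : ℂ) ≠ 0 := by
        simpa using hspos.ne'
      have hzw : (s : ℂ) * (z - wpt (j, k)) = u - (δ₁ : ℂ) * (j + k * Complex.I) := by
        rw [hwpt_def, hu_def, mul_sub]
        congr 1
        rw [mul_comm ((s : ℂ)), div_mul_cancel₀ _ hsne]
      rw [hzw]
      -- reduce modulo the lattice
      have hlat := fockG_sub_lattice (u - (δ₁ : ℂ) * (j + k * Complex.I)) ⌊u.re⌋ ⌊u.im⌋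
      rw [← hlat]
      apply hδG
      -- bound the modulus of the remainder
      set v : ℂ := u - (δ₁ : ℂ) * (j + k * Complex.I) - (⌊u.re⌋ + ⌊u.im⌋ * Complex.I) with hv_def
      have hvre : v.re = (u.re - ⌊u.re⌋) - j * δ₁ := by
        rw [hv_def]
        simp only [Complex.sub_re, Complex.add_re, Complex.mul_re, Complex.mul_im,
          Complex.add_im, Complex.sub_im, Complex.ofReal_re, Complex.ofReal_im,
          Complex.intCast_re, Complex.intCast_im, Complex.natCast_re, Complex.natCast_im,
          Complex.I_re, Complex.I_im]
        ring
      have hvim : v.im = (u.im - ⌊u.im⌋) - k * δ₁ := by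
        rw [hv_def]
        simp only [Complex.sub_re, Complex.add_re, Complex.mul_re, Complex.mul_im,
          Complex.add_im, Complex.sub_im, Complex.ofReal_re, Complex.ofReal_im,
          Complex.intCast_re, Complex.intCast_im, Complex.natCast_re, Complex.natCast_im,
          Complex.I_re, Complex.I_im]
        ring
      have hjfl : (j : ℝ) * δ₁ ≤ u.re - ⌊u.re⌋ := by
        have := Nat.floor_le (by positivity : (0:ℝ) ≤ (u.re - ⌊u.re⌋) / δ₁)
        calc (j : ℝ) * δ₁ ≤ ((u.re - ⌊u.re⌋) / δ₁) * δ₁ := by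
              exact mul_le_mul_of_nonneg_right this hδ₁.le
          _ = u.re - ⌊u.re⌋ := by field_simp
      have hjfl2 : u.re - ⌊u.re⌋ - j * δ₁ ≤ δ₁ := by
        have := Nat.lt_floor_add_one ((u.re - ⌊u.re⌋) / δ₁)
        have h' : u.re - ⌊u.re⌋ < (j + 1) * δ₁ := by
          calc u.re - ⌊u.re⌋ = ((u.re - ⌊u.re⌋) / δ₁) * δ₁ := by field_simp
            _ < (j + 1) * δ₁ := by
              exact mul_lt_mul_of_pos_right this hδ₁
        nlinarith
      have hkfl : (k : ℝ) * δ₁ ≤ u.im - ⌊u.im⌋ := by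
        have := Nat.floor_le (by positivity : (0:ℝ) ≤ (u.im - ⌊u.im⌋) / δ₁)
        calc (k : ℝ) * δ₁ ≤ ((u.im - ⌊u.im⌋) / δ₁) * δ₁ := by
              exact mul_le_mul_of_nonneg_right this hδ₁.le
          _ = u.im - ⌊u.im⌋ := by field_simp
      have hkfl2 : u.im - ⌊u.im⌋ - k * δ₁ ≤ δ₁ := by
        have := Nat.lt_floor_add_one ((u.im - ⌊u.im⌋) / δ₁)
        have h' : u.im - ⌊u.im⌋ < (k + 1) * δ₁ := by
          calc u.im - ⌊u.im⌋ = ((u.im - ⌊u.im⌋) / δ₁) * δ₁ := by field_simp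
            _ < (k + 1) * δ₁ := by
              exact mul_lt_mul_of_pos_right this hδ₁
        nlinarith
      calc ‖v‖ ≤ |v.re| + |v.im| := Complex.norm_le_abs_re_add_abs_im v
        _ ≤ δ₁ + δ₁ := by
            rw [hvre, hvim, _root_.abs_of_nonneg (by linarith), _root_.abs_of_nonneg (by linarith)]
            linarith
        _ = δ := by rw [hδ₁_def]; ring
    -- measurability of the integrands
    have hmeas : ∀ q : ℕ × ℕ, Measurable fun z : ℂ =>
        ENNReal.ofReal (fockG ((s : ℂ) * (z - wpt q)) ^ p) := by
      intro q
      have hcont : Continuous fun z : ℂ => fockG ((s : ℂ) * (z - wpt q)) :=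
        continuous_fockG.comp (continuous_const.mul (continuous_id.sub continuous_const))
      exact ENNReal.measurable_ofReal.comp
        ((hcont.rpow_const (fun _ => Or.inr hp.le)).measurable)
    -- put it together
    have big : ENNReal.ofReal ((fockG 0 / 2) ^ p) * μ Set.univ
        ≤ ∑ q ∈ Finset.range N ×ˢ Finset.range N,
            ∫⁻ z, ENNReal.ofReal (fockG ((s : ℂ) * (z - wpt q)) ^ p) ∂μ := by
      rw [← lintegral_const, ← lintegral_finset_sum _ (fun q _ => hmeas q)]
      apply lintegral_mono
      intro z
      obtain ⟨q, hq, hGq⟩ := cover z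
      calc ENNReal.ofReal ((fockG 0 / 2) ^ p)
          ≤ ENNReal.ofReal (fockG ((s : ℂ) * (z - wpt q)) ^ p) := by
            apply ENNReal.ofReal_le_ofReal
            exact Real.rpow_le_rpow (by positivity) hGq hp.le
        _ ≤ ∑ q' ∈ Finset.range N ×ˢ Finset.range N,
              ENNReal.ofReal (fockG ((s : ℂ) * (z - wpt q')) ^ p) :=
            Finset.single_le_sum
              (f := fun q' => ENNReal.ofReal (fockG ((s : ℂ) * (z - wpt q')) ^ p))
              (fun _ _ => zero_le) hq
    have fin : (∑ q ∈ Finset.range N ×ˢ Finset.range N,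
        ∫⁻ z, ENNReal.ofReal (fockG ((s : ℂ) * (z - wpt q)) ^ p) ∂μ) < ⊤ := by
      apply lt_of_le_of_lt (Finset.sum_le_sum (fun q _ => key (wpt q)))
      rw [Finset.sum_const, nsmul_eq_mul]
      exact ENNReal.mul_lt_top (ENNReal.natCast_lt_top _)
        (ENNReal.mul_lt_top hC (ENNReal.rpow_lt_top_of_nonneg hp.le ENNReal.ofReal_ne_top))
    by_contra hcon
    rw [not_lt, top_le_iff] at hcon
    rw [hcon, ENNReal.mul_top] at big
    · exact fin.ne (top_le_iff.mp big)
    · simp only [ne_eq, ENNReal.ofReal_eq_zero, not_le]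
      positivity
  · intro hμ
    refine ⟨μ Set.univ, hμ, fun f hf hnorm => ?_⟩
    have hpt : ∀ z : ℂ, ENNReal.ofReal
        (‖f z‖ ^ p * Real.exp (-(p * α / 2) * ‖z‖ ^ 2))
        ≤ fockNormInf α f ^ p := by
      intro z
      have h1 : ‖f z‖ ^ p * Real.exp (-(p * α / 2) * ‖z‖ ^ 2)
          = (‖f z‖ * Real.exp (-(α / 2) * ‖z‖ ^ 2)) ^ p := by
        rw [Real.mul_rpow (norm_nonneg _) (Real.exp_pos _).le, ← Real.exp_mul,
          show -(α / 2) * ‖z‖ ^ 2 * p = -(p * α / 2) * ‖z‖ ^ 2 by ring]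
      rw [h1, ← ENNReal.ofReal_rpow_of_nonneg (by positivity) hp.le]
      unfold fockNormInf
      exact ENNReal.rpow_le_rpow (le_iSup (fun z : ℂ => ENNReal.ofReal
        (‖f z‖ * Real.exp (-(α / 2) * ‖z‖ ^ 2))) z) hp.le
    calc ∫⁻ z, ENNReal.ofReal
          (‖f z‖ ^ p * Real.exp (-(p * α / 2) * ‖z‖ ^ 2)) ∂μ
        ≤ ∫⁻ _, fockNormInf α f ^ p ∂μ := lintegral_mono hpt
      _ = fockNormInf α f ^ p * μ Set.univ := lintegral_const _
      _ = μ Set.univ * fockNormInf α f ^ p := mul_comm _ _
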